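/- Let η > 0, α > 0, β ≥ 0, and let X, X̃ ∈ ℝ^{n×d} satisfy: (i) X Xᵀ ⪰ η · I_n; (ii) every column of X and every column of X̃ has Euclidean norm at most α; (iii) there exists exactly one index i ∈ [d] with ‖X_{*,i} - X̃_{*,i}‖₂ ≤ β, and X_{*,j} = X̃_{*,j} for all j ∈ [d] \ {i}. Then (1 - 2αβ/η) X Xᵀ ⪯ X̃ X̃ᵀ ⪯ (1 + 2αβ/η) X Xᵀ in the Loewner order. -/

import Mathlib

open Matrix

/-- The Euclidean (ℓ₂) norm of a vector. -/
noncomputable def l2Norm {n : ℕ} (u : Fin n → ℝ) : ℝ :=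
  Real.sqrt (∑ i, (u i) ^ 2)

lemma l2Norm_sq_bound {n : ℕ} (u : Fin n → ℝ) (γ : ℝ)
    (h : l2Norm u ≤ γ) : ∑ r, (u r) ^ 2 ≤ γ ^ 2 := by
  have h0 : 0 ≤ ∑ r, (u r) ^ 2 := Finset.sum_nonneg fun _ _ => sq_nonneg _
  calc ∑ r, (u r) ^ 2 = Real.sqrt (∑ r, (u r) ^ 2) ^ 2 := (Real.sq_sqrt h0).symm
    _ ≤ γ ^ 2 := pow_le_pow_left₀ (Real.sqrt_nonneg _) h 2

lemma quad_form_gram {n d : ℕ} (A : Matrix (Fin n) (Fin d) ℝ) (z : Fin n → ℝ) :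
    z ⬝ᵥ ((A * Aᵀ) *ᵥ z) = ∑ j, (∑ r, z r * A r j) ^ 2 := by
  rw [← mulVec_mulVec, dotProduct_mulVec]
  simp only [vecMul, dotProduct, mulVec, sq, transpose_apply]
  exact Finset.sum_congr rfl fun j _ => by
    rw [Finset.sum_congr rfl fun r _ => mul_comm (A r j) (z r)]

lemma gram_isHermitian {n d : ℕ} (A : Matrix (Fin n) (Fin d) ℝ) :
    (A * Aᵀ).IsHermitian := by
  rw [← conjTranspose_eq_transpose_of_trivial]
  exact isHermitian_mul_conjTranspose_self A

lemma isHermitian_smul_real {n : ℕ} (M : Matrix (Fin n) (Fin n) ℝ) (c : ℝ)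
    (h1 : M.IsHermitian) : (c • M).IsHermitian := by
  unfold Matrix.IsHermitian at *
  rw [conjTranspose_smul, h1]; simp

/-- Abstract scalar inequality extracted from Cauchy–Schwarz data. -/
lemma key_scalar (α β Z s t : ℝ) (hα : 0 < α) (hβ : 0 ≤ β) (hZ : 0 ≤ Z)
    (hst : (s - t) ^ 2 ≤ β ^ 2 * Z) (hsq : s ^ 2 ≤ α ^ 2 * Z)
    (htq : t ^ 2 ≤ α ^ 2 * Z) : |t ^ 2 - s ^ 2| ≤ 2 * α * β * Z := by
  rw [abs_le]
  rcases hβ.lt_or_eq with hβ' | hβ'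
  · constructor
    · nlinarith [sq_nonneg (2 * α * (t - s) - β * (s + t)), sq_nonneg (s + t),
        mul_pos hα hβ', mul_nonneg (mul_nonneg hα.le hβ'.le) hZ]
    · nlinarith [sq_nonneg (2 * α * (s - t) - β * (s + t)), sq_nonneg (s + t),
        mul_pos hα hβ', mul_nonneg (mul_nonneg hα.le hβ'.le) hZ]
  · rw [← hβ'] at hst
    have hst0 : s = t := by nlinarith [sq_nonneg (s - t)]
    subst hst0
    constructor <;> nlinarith [mul_nonneg (mul_nonneg hα.le hβ) hZ]

theorem sensitivity_of_gram_matrix {n d : ℕ} (η α β : ℝ)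
    (hη : 0 < η) (hα : 0 < α) (hβ : 0 ≤ β)
    (X Xt : Matrix (Fin n) (Fin d) ℝ)
    (hgood : (X * Xᵀ - η • (1 : Matrix (Fin n) (Fin n) ℝ)).PosSemidef)
    (hcolX : ∀ i : Fin d, l2Norm (fun r => X r i) ≤ α)
    (hcolXt : ∀ i : Fin d, l2Norm (fun r => Xt r i) ≤ α)
    (hneighbor : ∃ i : Fin d,
      l2Norm (fun r => X r i - Xt r i) ≤ β ∧
      ∀ j, j ≠ i → ∀ r, X r j = Xt r j) :
    (Xt * Xtᵀ - (1 - 2 * α * β / η) • (X * Xᵀ)).PosSemidef ∧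
    ((1 + 2 * α * β / η) • (X * Xᵀ) - Xt * Xtᵀ).PosSemidef := by
  obtain ⟨i, hdist, heq⟩ := hneighbor
  have hXi : ∑ r, (X r i) ^ 2 ≤ α ^ 2 := l2Norm_sq_bound _ _ (hcolX i)
  have hXti : ∑ r, (Xt r i) ^ 2 ≤ α ^ 2 := l2Norm_sq_bound _ _ (hcolXt i)
  have hdiff : ∑ r, (X r i - Xt r i) ^ 2 ≤ β ^ 2 := l2Norm_sq_bound _ _ hdist
  -- lower bound from goodness
  have hg : ∀ z : Fin n → ℝ, η * (∑ r, (z r) ^ 2) ≤ z ⬝ᵥ ((X * Xᵀ) *ᵥ z) := by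
    intro z
    have h := hgood.dotProduct_mulVec_nonneg z
    simp only [star_trivial] at h
    rw [sub_mulVec, dotProduct_sub, smul_mulVec, dotProduct_smul, one_mulVec,
      smul_eq_mul] at h
    have hdd : z ⬝ᵥ z = ∑ r, (z r) ^ 2 := by simp [dotProduct, sq]
    rw [hdd] at h
    linarith
  -- the key pointwise bounds
  have key : ∀ z : Fin n → ℝ,
      |z ⬝ᵥ ((Xt * Xtᵀ) *ᵥ z) - z ⬝ᵥ ((X * Xᵀ) *ᵥ z)|
        ≤ 2 * α * β * (∑ r, (z r) ^ 2) := by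
    intro z
    have hZ : (0:ℝ) ≤ ∑ r, (z r) ^ 2 := Finset.sum_nonneg fun _ _ => sq_nonneg _
    have hsum : ∑ r, z r * (X r i - Xt r i)
        = (∑ r, z r * X r i) - (∑ r, z r * Xt r i) := by
      simp [mul_sub, Finset.sum_sub_distrib]
    have hst : ((∑ r, z r * X r i) - (∑ r, z r * Xt r i)) ^ 2
        ≤ β ^ 2 * ∑ r, (z r) ^ 2 := by
      have hcs := Finset.sum_mul_sq_le_sq_mul_sq Finset.univ
        (fun r => z r) (fun r => X r i - Xt r i)
      rw [hsum] at hcs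
      calc ((∑ r, z r * X r i) - (∑ r, z r * Xt r i)) ^ 2
          ≤ (∑ r, (z r) ^ 2) * ∑ r, (X r i - Xt r i) ^ 2 := hcs
        _ ≤ (∑ r, (z r) ^ 2) * β ^ 2 := mul_le_mul_of_nonneg_left hdiff hZ
        _ = β ^ 2 * ∑ r, (z r) ^ 2 := mul_comm _ _
    have hsq : (∑ r, z r * X r i) ^ 2 ≤ α ^ 2 * ∑ r, (z r) ^ 2 := by
      have hcs := Finset.sum_mul_sq_le_sq_mul_sq Finset.univ
        (fun r => z r) (fun r => X r i)
      calc (∑ r, z r * X r i) ^ 2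
          ≤ (∑ r, (z r) ^ 2) * ∑ r, (X r i) ^ 2 := hcs
        _ ≤ (∑ r, (z r) ^ 2) * α ^ 2 := mul_le_mul_of_nonneg_left hXi hZ
        _ = α ^ 2 * ∑ r, (z r) ^ 2 := mul_comm _ _
    have htq : (∑ r, z r * Xt r i) ^ 2 ≤ α ^ 2 * ∑ r, (z r) ^ 2 := by
      have hcs := Finset.sum_mul_sq_le_sq_mul_sq Finset.univ
        (fun r => z r) (fun r => Xt r i)
      calc (∑ r, z r * Xt r i) ^ 2
          ≤ (∑ r, (z r) ^ 2) * ∑ r, (Xt r i) ^ 2 := hcs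
        _ ≤ (∑ r, (z r) ^ 2) * α ^ 2 := mul_le_mul_of_nonneg_left hXti hZ
        _ = α ^ 2 * ∑ r, (z r) ^ 2 := mul_comm _ _
    have hsplit : z ⬝ᵥ ((Xt * Xtᵀ) *ᵥ z) - z ⬝ᵥ ((X * Xᵀ) *ᵥ z)
        = (∑ r, z r * Xt r i) ^ 2 - (∑ r, z r * X r i) ^ 2 := by
      rw [quad_form_gram, quad_form_gram,
        ← Finset.sum_erase_add _ _ (Finset.mem_univ i),
        ← Finset.sum_erase_add _ _ (Finset.mem_univ i)]
      have hsame : ∑ j ∈ Finset.univ.erase i, (∑ r, z r * Xt r j) ^ 2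
          = ∑ j ∈ Finset.univ.erase i, (∑ r, z r * X r j) ^ 2 := by
        refine Finset.sum_congr rfl fun j hj => ?_
        rw [Finset.sum_congr rfl fun r _ => by
          rw [← heq j (Finset.ne_of_mem_erase hj) r]]
      rw [hsame]; ring
    rw [hsplit]
    exact key_scalar α β _ _ _ hα hβ hZ hst hsq htq
  -- the scaling inequality
  have hscale : ∀ z : Fin n → ℝ,
      2 * α * β * (∑ r, (z r) ^ 2) ≤ 2 * α * β / η * (z ⬝ᵥ ((X * Xᵀ) *ᵥ z)) := by
    intro z
    calc 2 * α * β * (∑ r, (z r) ^ 2)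
        = 2 * α * β / η * (η * ∑ r, (z r) ^ 2) := by field_simp
      _ ≤ 2 * α * β / η * (z ⬝ᵥ ((X * Xᵀ) *ᵥ z)) :=
          mul_le_mul_of_nonneg_left (hg z) (by positivity)
  have hH1 : (X * Xᵀ).IsHermitian := gram_isHermitian X
  have hH2 : (Xt * Xtᵀ).IsHermitian := gram_isHermitian Xt
  constructor
  · refine PosSemidef.of_dotProduct_mulVec_nonneg (hH2.sub (isHermitian_smul_real _ _ hH1)) fun z => ?_
    simp only [star_trivial]
    rw [sub_mulVec, dotProduct_sub, smul_mulVec, dotProduct_smul, smul_eq_mul]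
    have h1 := (abs_le.mp (key z)).1
    have h3 := hscale z
    nlinarith [h1, h3]
  · refine PosSemidef.of_dotProduct_mulVec_nonneg ((isHermitian_smul_real _ _ hH1).sub hH2) fun z => ?_
    simp only [star_trivial]
    rw [sub_mulVec, dotProduct_sub, smul_mulVec, dotProduct_smul, smul_eq_mul]
    have h1 := (abs_le.mp (key z)).2
    have h3 := hscale z
    nlinarith [h1, h3]
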